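/- The representation of CL_3(fb) with dimension vector (1,2,1) on top and (0,1,0) on bottom — top row K →^{(1,0)ᵀ} K² ←^{(0,1)ᵀ} K, bottom row 0 → K ← 0, middle vertical map (1,1)ᵀ : K → K² — is an indecomposable representation whose dimension vector has an entry exceeding 1. -/

import Mathlib

noncomputable section

/-- A representation of the commutative ladder `CL_3(fb)`, on the quiver
`1 → 2 ← 3` (both rows), with vertical maps upward and commutativity
relations. `B` denotes the bottom row and `T` the top row. -/
structure CL3fbRep (K : Type) [Field K] where
  B1 : Type
  B2 : Type
  B3 : Type
  T1 : Type
  T2 : Type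
  T3 : Type
  [a1 : AddCommGroup B1] [a2 : AddCommGroup B2] [a3 : AddCommGroup B3]
  [a4 : AddCommGroup T1] [a5 : AddCommGroup T2] [a6 : AddCommGroup T3]
  [m1 : Module K B1] [m2 : Module K B2] [m3 : Module K B3]
  [m4 : Module K T1] [m5 : Module K T2] [m6 : Module K T3]
  hb1 : B1 →ₗ[K] B2
  hb3 : B3 →ₗ[K] B2
  ht1 : T1 →ₗ[K] T2
  ht3 : T3 →ₗ[K] T2
  v1 : B1 →ₗ[K] T1
  v2 : B2 →ₗ[K] T2
  v3 : B3 →ₗ[K] T3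
  comm1 : ∀ x, ht1 (v1 x) = v2 (hb1 x)
  comm3 : ∀ x, ht3 (v3 x) = v2 (hb3 x)

attribute [instance] CL3fbRep.a1 CL3fbRep.a2 CL3fbRep.a3
attribute [instance] CL3fbRep.a4 CL3fbRep.a5 CL3fbRep.a6
attribute [instance] CL3fbRep.m1 CL3fbRep.m2 CL3fbRep.m3
attribute [instance] CL3fbRep.m4 CL3fbRep.m5 CL3fbRep.m6

variable {K : Type} [Field K]

/-- All spaces trivial. -/
def CL3fbRep.IsZero (M : CL3fbRep K) : Prop :=
  Subsingleton M.B1 ∧ Subsingleton M.B2 ∧ Subsingleton M.B3 ∧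
  Subsingleton M.T1 ∧ Subsingleton M.T2 ∧ Subsingleton M.T3

/-- Direct sum of representations of `CL_3(fb)`. -/
def CL3fbRep.dsum (M N : CL3fbRep K) : CL3fbRep K where
  B1 := M.B1 × N.B1
  B2 := M.B2 × N.B2
  B3 := M.B3 × N.B3
  T1 := M.T1 × N.T1
  T2 := M.T2 × N.T2
  T3 := M.T3 × N.T3
  hb1 := M.hb1.prodMap N.hb1
  hb3 := M.hb3.prodMap N.hb3
  ht1 := M.ht1.prodMap N.ht1
  ht3 := M.ht3.prodMap N.ht3
  v1 := M.v1.prodMap N.v1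
  v2 := M.v2.prodMap N.v2
  v3 := M.v3.prodMap N.v3
  comm1 x := by simp [LinearMap.prodMap_apply, M.comm1, N.comm1]
  comm3 x := by simp [LinearMap.prodMap_apply, M.comm3, N.comm3]

/-- Isomorphism of representations of `CL_3(fb)`. -/
def CL3fbIso (M N : CL3fbRep K) : Prop :=
  ∃ (e1 : M.B1 ≃ₗ[K] N.B1) (e2 : M.B2 ≃ₗ[K] N.B2) (e3 : M.B3 ≃ₗ[K] N.B3)
    (f1 : M.T1 ≃ₗ[K] N.T1) (f2 : M.T2 ≃ₗ[K] N.T2) (f3 : M.T3 ≃ₗ[K] N.T3),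
    (∀ x, e2 (M.hb1 x) = N.hb1 (e1 x)) ∧
    (∀ x, e2 (M.hb3 x) = N.hb3 (e3 x)) ∧
    (∀ x, f2 (M.ht1 x) = N.ht1 (f1 x)) ∧
    (∀ x, f2 (M.ht3 x) = N.ht3 (f3 x)) ∧
    (∀ x, f1 (M.v1 x) = N.v1 (e1 x)) ∧
    (∀ x, f2 (M.v2 x) = N.v2 (e2 x)) ∧
    (∀ x, f3 (M.v3 x) = N.v3 (e3 x))

/-- Indecomposability. -/
def CL3fbRep.Indec (M : CL3fbRep K) : Prop :=
  ¬ M.IsZero ∧ ∀ N N' : CL3fbRep K, CL3fbIso M (N.dsum N') → N.IsZero ∨ N'.IsZero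

/-- The representation of `CL_3(fb)` with dimension vector `(1,2,1)` on top and
`(0,1,0)` on the bottom: top row `K →^{(1,0)ᵀ} K² ←^{(0,1)ᵀ} K`, bottom row
`0 → K ← 0`, middle vertical map `(1,1)ᵀ : K → K²`. -/
def ex15 (K : Type) [Field K] : CL3fbRep K where
  B1 := PUnit
  B2 := K
  B3 := PUnit
  T1 := K
  T2 := K × K
  T3 := K
  hb1 := 0
  hb3 := 0
  ht1 := LinearMap.inl K K K
  ht3 := LinearMap.inr K K K
  v1 := 0
  v2 := LinearMap.prod LinearMap.id LinearMap.id
  v3 := 0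
  comm1 x := by simp
  comm3 x := by simp


section Aux

lemma aux_sub_fst {V A B : Type} [Zero A] [Zero B] (f : V → A × B)
    (hs : Function.Surjective f) (h : ∀ z, (f z).1 = 0) : Subsingleton A := by
  refine ⟨fun u v => ?_⟩
  obtain ⟨z, hz⟩ := hs (u, 0)
  obtain ⟨w, hw⟩ := hs (v, 0)
  have h1 := h z; have h2 := h w
  rw [hz] at h1; rw [hw] at h2
  simp only at h1 h2
  rw [h1, h2]

lemma aux_sub_snd {V A B : Type} [Zero A] [Zero B] (f : V → A × B)
    (hs : Function.Surjective f) (h : ∀ z, (f z).2 = 0) : Subsingleton B := by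
  refine ⟨fun u v => ?_⟩
  obtain ⟨z, hz⟩ := hs (0, u)
  obtain ⟨w, hw⟩ := hs (0, v)
  have h1 := h z; have h2 := h w
  rw [hz] at h1; rw [hw] at h2
  simp only at h1 h2
  rw [h1, h2]

lemma sub_prod_fst {A B : Type} [Zero B] (h : Subsingleton (A × B)) : Subsingleton A :=
  ⟨fun u v => congrArg Prod.fst (h.elim (u, 0) (v, 0))⟩

lemma sub_prod_snd {A B : Type} [Zero A] (h : Subsingleton (A × B)) : Subsingleton B :=
  ⟨fun u v => congrArg Prod.snd (h.elim (0, u) (0, v))⟩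

variable {K : Type} [Field K]

lemma lin_aux {A B : Type} [AddCommGroup A] [AddCommGroup B] [Module K A] [Module K B]
    (f : K ≃ₗ[K] A × B) (x : K) :
    f.symm ((f x).1, 0) = x * f.symm ((f 1).1, 0) := by
  have hx : f x = x • f 1 := by rw [← map_smul, smul_eq_mul, mul_one]
  rw [hx, show ((x • f 1).1, (0:B)) = x • ((f 1).1, (0:B)) from by
    simp [Prod.smul_mk], map_smul, smul_eq_mul]

lemma idem_aux {A B : Type} [AddCommGroup A] [AddCommGroup B] [Module K A] [Module K B]
    (f : K ≃ₗ[K] A × B) :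
    f.symm ((f 1).1, 0) * f.symm ((f 1).1, 0) = f.symm ((f 1).1, 0) := by
  have h := lin_aux f (f.symm ((f 1).1, 0))
  rw [f.apply_symm_apply] at h
  exact h.symm

end Aux

/-- the above representation of `CL_3(fb)` is indecomposable, and
its dimension vector has an entry exceeding `1` (the middle top space has
dimension `2`). -/
theorem stmt15 (K : Type) [Field K] :
    (ex15 K).Indec ∧ 1 < Module.finrank K (ex15 K).T2 := by
  constructor
  · constructor
    · rintro ⟨-, -, -, -, h, -⟩
      exact one_ne_zero (congrArg Prod.fst
        (h.elim ((1 : K), (0 : K)) ((0 : K), (0 : K))))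
    · rintro N N' ⟨e1, e2, e3, f1, f2, f3, -, -, ht1c, ht3c, -, hv2, -⟩
      -- the structure maps, made explicit
      have fact1 : ∀ x : K, f2 (x, (0:K)) = (N.ht1 (f1 x).1, N'.ht1 (f1 x).2) :=
        fun x => ht1c x
      have fact3 : ∀ x : K, f2 ((0:K), x) = (N.ht3 (f3 x).1, N'.ht3 (f3 x).2) :=
        fun x => ht3c x
      have factv : ∀ x : K, f2 (x, x) = (N.v2 (e2 x).1, N'.v2 (e2 x).2) :=
        fun x => hv2 x
      set a : K := f1.symm ((f1 (1:K)).1, 0) with ha_def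
      set b : K := e2.symm ((e2 (1:K)).1, 0) with hb_def
      set c : K := f3.symm ((f3 (1:K)).1, 0) with hc_def
      have lin1 : ∀ x : K, f1.symm ((f1 x).1, 0) = x * a := by
        intro x; rw [ha_def]; exact lin_aux f1 x
      have lin2 : ∀ x : K, e2.symm ((e2 x).1, 0) = x * b := by
        intro x; rw [hb_def]; exact lin_aux e2 x
      have lin3 : ∀ x : K, f3.symm ((f3 x).1, 0) = x * c := by
        intro x; rw [hc_def]; exact lin_aux f3 x
      have key1 : ∀ x : K, f2.symm ((f2 (x, (0:K))).1, 0) = ((x * a : K), (0:K)) := by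
        intro x
        have h3 : f1 (x * a) = ((f1 x).1, 0) := by
          erw [← lin1 x, f1.apply_symm_apply]
        erw [fact1 x, LinearEquiv.symm_apply_eq, fact1 (x * a), h3]
        simp
        rfl
      have key3 : ∀ x : K, f2.symm ((f2 ((0:K), x)).1, 0) = ((0:K), (x * c : K)) := by
        intro x
        have h3 : f3 (x * c) = ((f3 x).1, 0) := by
          erw [← lin3 x, f3.apply_symm_apply]
        erw [fact3 x, LinearEquiv.symm_apply_eq, fact3 (x * c), h3]
        simp
        rfl
      have keyv : ∀ x : K, f2.symm ((f2 (x, x)).1, 0) = ((x * b : K), (x * b : K)) := by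
        intro x
        have h3 : e2 (x * b) = ((e2 x).1, 0) := by
          erw [← lin2 x, e2.apply_symm_apply]
        erw [factv x, LinearEquiv.symm_apply_eq, factv (x * b), h3]
        simp
        rfl
      have hsplit : ∀ x y : K, ((x, y) : K × K) = (x, (0:K)) + ((0:K), y) := by
        intro x y; simp
      have habc : ((1 * b : K), (1 * b : K)) = ((1 * a : K), (1 * c : K)) := by
        calc ((1 * b : K), (1 * b : K)) = @id (K × K) (f2.symm ((f2 ((1:K), (1:K))).1, 0)) :=
              (keyv 1).symm
          _ = @id (K × K) (f2.symm ((f2 ((1:K), (0:K))).1, 0) + f2.symm ((f2 ((0:K), (1:K))).1, 0)) := by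
              erw [hsplit 1 1, map_add]
              rw [show ((f2 ((1:K), (0:K)) + f2 ((0:K), (1:K))).1,
                    (0 : N'.T2)) =
                  ((f2 ((1:K), (0:K))).1, (0 : N'.T2)) +
                  ((f2 ((0:K), (1:K))).1, (0 : N'.T2)) from by
                have : (f2 ((1:K), (0:K)) + f2 ((0:K), (1:K))).1 =
                    (f2 ((1:K), (0:K))).1 + (f2 ((0:K), (1:K))).1 := rfl
                simp [Prod.ext_iff, this]]
              erw [map_add]
          _ = ((1 * a : K), (0:K)) + ((0:K), (1 * c : K)) := by rw [key1, key3]; rfl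
          _ = ((1 * a : K), (1 * c : K)) := by simp
      have hba : b = a := by
        have := congrArg Prod.fst habc; simpa using this
      have hbc : b = c := by
        have := congrArg Prod.snd habc; simpa using this
      have haa : a * a = a := by
        have h := lin1 a
        erw [ha_def, f1.apply_symm_apply, ← ha_def] at h
        exact h.symm
      have hfac : a * (a - 1) = 0 := by rw [mul_sub, mul_one, haa, sub_self]
      have ha01 : a = 0 ∨ a = 1 := by
        rcases mul_eq_zero.mp hfac with h | h
        · exact Or.inl h
        · exact Or.inr (by linear_combination h)
      rcases ha01 with h0 | h1
      · -- a = 0 : N is zero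
        left
        have hb0 : b = 0 := by rw [hba, h0]
        have hc0 : c = 0 := by rw [← hbc, hb0]
        have fst1 : ∀ x : K, (f1 x).1 = 0 := by
          intro x
          have h := lin1 x
          rw [h0, mul_zero] at h
          have h2 : ((f1 x).1, (0 : N'.T1)) = 0 :=
            f1.symm.injective (h.trans (map_zero f1.symm).symm)
          exact congrArg Prod.fst h2
        have fstb : ∀ x : K, (e2 x).1 = 0 := by
          intro x
          have h := lin2 x
          rw [hb0, mul_zero] at h
          have h2 : ((e2 x).1, (0 : N'.B2)) = 0 :=
            e2.symm.injective (h.trans (map_zero e2.symm).symm)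
          exact congrArg Prod.fst h2
        have fst3 : ∀ x : K, (f3 x).1 = 0 := by
          intro x
          have h := lin3 x
          rw [hc0, mul_zero] at h
          have h2 : ((f3 x).1, (0 : N'.T3)) = 0 :=
            f3.symm.injective (h.trans (map_zero f3.symm).symm)
          exact congrArg Prod.fst h2
        have fst2 : ∀ z : K × K, (f2 z).1 = 0 := by
          rintro ⟨x, y⟩
          have hx : (f2 (x, (0:K))).1 = 0 := by
            have h := key1 x
            rw [h0, mul_zero] at h
            have h2 : ((f2 (x, (0:K))).1, (0 : N'.T2)) = 0 := by
              apply f2.symm.injective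
              erw [h, map_zero]
              rfl
            exact congrArg Prod.fst h2
          have hy : (f2 ((0:K), y)).1 = 0 := by
            have h := key3 y
            rw [hc0, mul_zero] at h
            have h2 : ((f2 ((0:K), y)).1, (0 : N'.T2)) = 0 := by
              apply f2.symm.injective
              erw [h, map_zero]
              rfl
            exact congrArg Prod.fst h2
          erw [hsplit x y, map_add]
          show (f2 (x, (0:K))).1 + (f2 ((0:K), y)).1 = 0
          rw [hx, hy, add_zero]
        haveI : Subsingleton ((ex15 K).B1) := inferInstanceAs (Subsingleton PUnit)
        haveI : Subsingleton ((ex15 K).B3) := inferInstanceAs (Subsingleton PUnit)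
        exact ⟨sub_prod_fst (e1.toEquiv.symm.subsingleton),
               aux_sub_fst e2 e2.surjective fstb,
               sub_prod_fst (e3.toEquiv.symm.subsingleton),
               aux_sub_fst f1 f1.surjective fst1,
               aux_sub_fst f2 f2.surjective fst2,
               aux_sub_fst f3 f3.surjective fst3⟩
      · -- a = 1 : N' is zero
        right
        have hb1' : b = 1 := by rw [hba, h1]
        have hc1 : c = 1 := by rw [← hbc, hb1']
        have snd1 : ∀ x : K, (f1 x).2 = 0 := by
          intro x
          have h := lin1 x
          rw [h1, mul_one] at h
          have h2 : ((f1 x).1, (0 : N'.T1)) = f1 x :=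
            (LinearEquiv.symm_apply_eq f1).mp h
          exact (congrArg Prod.snd h2).symm
        have sndb : ∀ x : K, (e2 x).2 = 0 := by
          intro x
          have h := lin2 x
          rw [hb1', mul_one] at h
          have h2 : ((e2 x).1, (0 : N'.B2)) = e2 x :=
            (LinearEquiv.symm_apply_eq e2).mp h
          exact (congrArg Prod.snd h2).symm
        have snd3 : ∀ x : K, (f3 x).2 = 0 := by
          intro x
          have h := lin3 x
          rw [hc1, mul_one] at h
          have h2 : ((f3 x).1, (0 : N'.T3)) = f3 x :=
            (LinearEquiv.symm_apply_eq f3).mp h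
          exact (congrArg Prod.snd h2).symm
        have snd2 : ∀ z : K × K, (f2 z).2 = 0 := by
          rintro ⟨x, y⟩
          have hx : (f2 (x, (0:K))).2 = 0 := by
            have h := key1 x
            rw [h1, mul_one] at h
            have h2 : ((f2 (x, (0:K))).1, (0 : N'.T2)) = f2 (x, (0:K)) :=
              (LinearEquiv.symm_apply_eq f2).mp h
            exact (congrArg Prod.snd h2).symm
          have hy : (f2 ((0:K), y)).2 = 0 := by
            have h := key3 y
            rw [hc1, mul_one] at h
            have h2 : ((f2 ((0:K), y)).1, (0 : N'.T2)) = f2 ((0:K), y) :=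
              (LinearEquiv.symm_apply_eq f2).mp h
            exact (congrArg Prod.snd h2).symm
          erw [hsplit x y, map_add]
          show (f2 (x, (0:K))).2 + (f2 ((0:K), y)).2 = 0
          rw [hx, hy, add_zero]
        haveI : Subsingleton ((ex15 K).B1) := inferInstanceAs (Subsingleton PUnit)
        haveI : Subsingleton ((ex15 K).B3) := inferInstanceAs (Subsingleton PUnit)
        exact ⟨sub_prod_snd (e1.toEquiv.symm.subsingleton),
               aux_sub_snd e2 e2.surjective sndb,
               sub_prod_snd (e3.toEquiv.symm.subsingleton),
               aux_sub_snd f1 f1.surjective snd1,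
               aux_sub_snd f2 f2.surjective snd2,
               aux_sub_snd f3 f3.surjective snd3⟩
  · show 1 < Module.finrank K (K × K)
    rw [Module.finrank_prod, Module.finrank_self]
    norm_num
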